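/- Let xs < xt be integers, C ≥ 0 a real number, and f : ℤ → ℝ a function satisfying the Ameso(C) condition on [xs,xt]. Suppose there exist x', z_s, z_t ∈ [xs,xt] with z_s < x' < z_t such that f(z_s) − f(x') ≥ C and f(z_t) − f(x') ≥ C. Then min over y ∈ [z_s, z_t] of f(y) equals min over y ∈ [xs, xt] of f(y). -/
import Mathlib

def mceil (x y : ℤ) : ℤ := ⌈((x : ℚ) + (y : ℚ)) / 2⌉
def mfloor (x y : ℤ) : ℤ := ⌊((x : ℚ) + (y : ℚ)) / 2⌋

lemma mfloor_eq (x y : ℤ) : mfloor x y = (x + y) / 2 := by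
  have h : ((x:ℚ) + y)/2 = ((x + y : ℤ) : ℚ) / ((2:ℕ) : ℚ) := by push_cast; ring
  rw [mfloor, h, Rat.floor_intCast_div_natCast]
  norm_num

lemma mceil_eq (x y : ℤ) : mceil x y = -((-(x + y)) / 2) := by
  have h : ((x:ℚ) + y)/2 = -(((-(x + y) : ℤ) : ℚ) / ((2:ℕ) : ℚ)) := by push_cast; ring
  rw [mceil, h, Int.ceil_neg, Rat.floor_intCast_div_natCast]
  norm_num

lemma mceil_same (a y z : ℤ) (h : y + z = 2 * a) : mceil y z = a := by
  rw [mceil_eq]; omega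

lemma mfloor_same (a y z : ℤ) (h : y + z = 2 * a) : mfloor y z = a := by
  rw [mfloor_eq]; omega

lemma mceil_reflect (s x y : ℤ) : mceil (s - x) (s - y) = s - mfloor x y := by
  rw [mceil_eq, mfloor_eq]; omega

lemma mfloor_reflect (s x y : ℤ) : mfloor (s - x) (s - y) = s - mceil x y := by
  rw [mfloor_eq, mceil_eq]; omega

/-- One-sided discard lemma, with explicit measure for induction. -/
lemma ameso_left_aux (xs xt : ℤ) (C : ℝ) (hC : 0 ≤ C) (f : ℤ → ℝ)
    (hA : ∀ x ∈ Finset.Icc xs xt, ∀ y ∈ Finset.Icc xs xt,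
      f x + f y + C ≥ f (mceil x y) + f (mfloor x y)) :
    ∀ (n : ℕ) (a b y : ℤ),
      ((Finset.Icc xs xt).filter (fun v => f a < f v)).card * ((xt - xs).toNat + 1)
          + ((xt - xs).toNat - (b - a).toNat) ≤ n →
      xs ≤ y → y ≤ a → a < b → b ≤ xt → f b + C ≤ f a → f b ≤ f y := by
  intro n
  induction n using Nat.strong_induction_on with
  | _ n ih =>
  intro a b y hm hxsy hya hab hbxt hgap
  set N := (xt - xs).toNat with hN
  set K : ℤ → ℕ := fun c => ((Finset.Icc xs xt).filter (fun v => f c < f v)).card with hK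
  have hm' : K a * (N + 1) + (N - (b - a).toNat) ≤ n := hm
  rcases eq_or_lt_of_le hya with rfl | hlt
  · linarith
  · -- y < a
    rcases le_or_gt (2*a - y) b with hpq | hpq
    · -- case (i): z := 2a - y ≤ b
      set z := 2*a - y with hz
      have hy_mem : y ∈ Finset.Icc xs xt := by rw [Finset.mem_Icc]; omega
      have hz_mem : z ∈ Finset.Icc xs xt := by rw [Finset.mem_Icc]; omega
      have ham := hA y hy_mem z hz_mem
      rw [mceil_same a y z (by omega), mfloor_same a y z (by omega)] at ham
      rcases le_or_gt (f z) (f a) with hfz | hfz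
      · linarith
      · rcases eq_or_lt_of_le hpq with hzb | hzb
        · exfalso; rw [hzb] at hfz; linarith
        · -- recurse on (z, b, y); K z < K a
          have hsub : (Finset.Icc xs xt).filter (fun v => f z < f v)
              ⊆ (Finset.Icc xs xt).filter (fun v => f a < f v) := by
            intro v hv
            rw [Finset.mem_filter] at hv ⊢
            exact ⟨hv.1, lt_trans hfz hv.2⟩
          have hKlt : K z < K a := by
            apply Finset.card_lt_card
            rw [Finset.ssubset_iff_of_subset hsub]
            exact ⟨z, by rw [Finset.mem_filter]; exact ⟨hz_mem, hfz⟩,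
              by rw [Finset.mem_filter]; push_neg; intro _; exact le_refl _⟩
          have hmeas : K z * (N + 1) + (N - (b - z).toNat) < n := by
            have h1 : K z * (N + 1) + (N - (b - z).toNat) ≤ K z * (N + 1) + N := by omega
            have h2 : K z * (N + 1) + N < (K z + 1) * (N + 1) := by ring_nf; omega
            have h3 : (K z + 1) * (N + 1) ≤ K a * (N + 1) := Nat.mul_le_mul_right _ hKlt
            have h4 : K a * (N + 1) ≤ n := le_trans (Nat.le_add_right _ _) hm'
            omega
          exact ih _ hmeas z b y (le_refl _) hxsy (by omega) hzb hbxt (by linarith)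
    · -- case (ii): w := 2a - b, y < w < a
      set w := 2*a - b with hw
      have hw_mem : w ∈ Finset.Icc xs xt := by rw [Finset.mem_Icc]; omega
      have hb_mem : b ∈ Finset.Icc xs xt := by rw [Finset.mem_Icc]; omega
      have ham := hA w hw_mem b hb_mem
      rw [mceil_same a w b (by omega), mfloor_same a w b (by omega)] at ham
      have hfw : f a ≤ f w := by linarith
      have hgap' : f b + C ≤ f w := by linarith
      have hKle : K w ≤ K a := by
        apply Finset.card_le_card
        intro v hv
        rw [Finset.mem_filter] at hv ⊢
        exact ⟨hv.1, lt_of_le_of_lt hfw hv.2⟩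
      have e1 : (b - a).toNat < (b - w).toNat := by omega
      have e2 : (b - w).toNat ≤ N := by rw [hN]; omega
      have hmeas : K w * (N + 1) + (N - (b - w).toNat) < n := by
        have h3 : K w * (N + 1) ≤ K a * (N + 1) := Nat.mul_le_mul_right _ hKle
        omega
      exact ih _ hmeas w b y (le_refl _) hxsy (by omega) (by omega) hbxt hgap'

lemma ameso_left (xs xt : ℤ) (C : ℝ) (hC : 0 ≤ C) (f : ℤ → ℝ)
    (hA : ∀ x ∈ Finset.Icc xs xt, ∀ y ∈ Finset.Icc xs xt,
      f x + f y + C ≥ f (mceil x y) + f (mfloor x y))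
    (a b y : ℤ) (h1 : xs ≤ y) (h2 : y ≤ a) (h3 : a < b) (h4 : b ≤ xt)
    (h5 : f b + C ≤ f a) : f b ≤ f y :=
  ameso_left_aux xs xt C hC f hA _ a b y (le_refl _) h1 h2 h3 h4 h5

lemma ameso_right (xs xt : ℤ) (C : ℝ) (hC : 0 ≤ C) (f : ℤ → ℝ)
    (hA : ∀ x ∈ Finset.Icc xs xt, ∀ y ∈ Finset.Icc xs xt,
      f x + f y + C ≥ f (mceil x y) + f (mfloor x y))
    (a b y : ℤ) (h1 : y ≤ xt) (h2 : a ≤ y) (h3 : b < a) (h4 : xs ≤ b)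
    (h5 : f b + C ≤ f a) : f b ≤ f y := by
  set s := xs + xt with hs
  set g : ℤ → ℝ := fun v => f (s - v) with hg
  have hA' : ∀ x ∈ Finset.Icc xs xt, ∀ y ∈ Finset.Icc xs xt,
      g x + g y + C ≥ g (mceil x y) + g (mfloor x y) := by
    intro u hu v hv
    rw [Finset.mem_Icc] at hu hv
    have hu' : s - u ∈ Finset.Icc xs xt := by rw [Finset.mem_Icc]; omega
    have hv' : s - v ∈ Finset.Icc xs xt := by rw [Finset.mem_Icc]; omega
    have := hA (s - u) hu' (s - v) hv'
    rw [mceil_reflect, mfloor_reflect] at this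
    simp only [hg]
    linarith
  have := ameso_left xs xt C hC g hA' (s - a) (s - b) (s - y)
    (by omega) (by omega) (by omega) (by omega)
    (by simp only [hg, sub_sub_cancel]; exact h5)
  simp only [hg, sub_sub_cancel] at this
  exact this

/-- Corollary 4: if `z_s < x' < z_t` in `[xs, xt]` with `f(z_s) - f(x') ≥ C` and
`f(z_t) - f(x') ≥ C`, then the minimum of `f` over `[z_s, z_t]` equals the minimum
over `[xs, xt]`. -/
theorem ameso_restrict_two_sided
    (xs xt : ℤ) (hxst : xs < xt) (C : ℝ) (hC : 0 ≤ C) (f : ℤ → ℝ)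
    (hAmeso : ∀ x ∈ Finset.Icc xs xt, ∀ y ∈ Finset.Icc xs xt,
      f x + f y + C ≥ f (mceil x y) + f (mfloor x y))
    (x' zs zt : ℤ) (hx'l : xs ≤ x') (hx'r : x' ≤ xt)
    (hzsl : xs ≤ zs) (hzsx' : zs < x') (hx'zt : x' < zt) (hztr : zt ≤ xt)
    (hgaps : f zs - f x' ≥ C) (hgapt : f zt - f x' ≥ C) :
    (Finset.Icc zs zt).inf' (Finset.nonempty_Icc.2 (by omega)) f
      = (Finset.Icc xs xt).inf' (Finset.nonempty_Icc.2 (by omega)) f := by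
  have hx'mem : x' ∈ Finset.Icc zs zt := by rw [Finset.mem_Icc]; omega
  apply le_antisymm
  · apply Finset.le_inf'
    intro y hy
    rw [Finset.mem_Icc] at hy
    rcases le_or_gt y zs with h1 | h1
    · have hxy : f x' ≤ f y :=
        ameso_left xs xt C hC f hAmeso zs x' y hy.1 h1 hzsx' hx'r (by linarith)
      exact le_trans (Finset.inf'_le f hx'mem) hxy
    · rcases le_or_gt y zt with h2 | h2
      · exact Finset.inf'_le f (by rw [Finset.mem_Icc]; omega)
      · have hxy : f x' ≤ f y :=
          ameso_right xs xt C hC f hAmeso zt x' y hy.2 (le_of_lt h2) hx'zt hx'l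
            (by linarith)
        exact le_trans (Finset.inf'_le f hx'mem) hxy
  · apply Finset.le_inf'
    intro y hy
    rw [Finset.mem_Icc] at hy
    exact Finset.inf'_le f (by rw [Finset.mem_Icc]; omega)
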